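/- If G is a profinite group whose abstract derived subgroup D(G) is open, then G has finite commutator width, i.e., there exists N such that every element of D(G) is a product of at most N commutators. -/

import Mathlib

open Set Pointwise

section Aux

variable {G : Type*} [Group G]

/-- Products of `k` commutators, in the exact shape of the target statement. -/
private def Scomm (G : Type*) [Group G] (k : ℕ) : Set G :=
  {g | ∃ a b : Fin k → G, g = (List.ofFn fun i => a i * b i * (a i)⁻¹ * (b i)⁻¹).prod}

/-- Products of lists of length `k` of commutators. -/
private def Tcomm (G : Type*) [Group G] (k : ℕ) : Set G :=
  {g | ∃ l : List G, l.length = k ∧ (∀ x ∈ l, x ∈ commutatorSet G) ∧ g = l.prod}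

private lemma Scomm_eq_Tcomm (k : ℕ) : Scomm G k = Tcomm G k := by
  ext g
  constructor
  · rintro ⟨a, b, rfl⟩
    refine ⟨List.ofFn fun i => a i * b i * (a i)⁻¹ * (b i)⁻¹, List.length_ofFn, ?_, rfl⟩
    intro x hx
    obtain ⟨i, hi⟩ := List.mem_ofFn.mp hx
    exact ⟨a i, b i, hi⟩
  · rintro ⟨l, rfl, hmem, rfl⟩
    choose a b hab using fun i : Fin l.length => hmem (l.get i) (l.get_mem i)
    refine ⟨a, b, ?_⟩
    have : (fun i : Fin l.length => a i * b i * (a i)⁻¹ * (b i)⁻¹) = l.get := by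
      funext i; exact hab i
    rw [this, List.ofFn_get]

private lemma one_mem_Tcomm (k : ℕ) : (1 : G) ∈ Tcomm G k := by
  refine ⟨List.replicate k 1, List.length_replicate, ?_, by simp⟩
  intro x hx
  rw [List.eq_of_mem_replicate hx]
  exact one_mem_commutatorSet G

private lemma Tcomm_mul {j k : ℕ} {g h : G} (hg : g ∈ Tcomm G j) (hh : h ∈ Tcomm G k) :
    g * h ∈ Tcomm G (j + k) := by
  obtain ⟨l, hl, hlm, rfl⟩ := hg
  obtain ⟨m, hm, hmm, rfl⟩ := hh
  refine ⟨l ++ m, by simp [hl, hm], ?_, by simp⟩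
  intro x hx
  rcases List.mem_append.mp hx with h | h
  exacts [hlm x h, hmm x h]

private lemma Tcomm_mono {j k : ℕ} (hjk : j ≤ k) : Tcomm G j ⊆ Tcomm G k := by
  intro g hg
  have := Tcomm_mul hg (one_mem_Tcomm (k - j))
  rwa [mul_one, Nat.add_sub_cancel' hjk] at this

private lemma Tcomm_inv {k : ℕ} {g : G} (hg : g ∈ Tcomm G k) : g⁻¹ ∈ Tcomm G k := by
  obtain ⟨l, hl, hlm, rfl⟩ := hg
  refine ⟨(l.map fun x => x⁻¹).reverse, by simp [hl], ?_, (List.prod_inv_reverse l)⟩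
  intro x hx
  rw [List.mem_reverse, List.mem_map] at hx
  obtain ⟨y, hy, rfl⟩ := hx
  obtain ⟨a, b, rfl⟩ := hlm y hy
  exact ⟨b, a, (commutatorElement_inv a b).symm⟩

private lemma Tcomm_subset (k : ℕ) : Tcomm G k ⊆ (commutator G : Set G) := by
  rintro g ⟨l, -, hlm, rfl⟩
  refine Subgroup.list_prod_mem _ fun x hx => ?_
  obtain ⟨a, b, rfl⟩ := hlm x hx
  rw [commutator_def]
  exact Subgroup.commutator_mem_commutator (Subgroup.mem_top a) (Subgroup.mem_top b)

private lemma mem_Tcomm_of_mem_commutator {g : G} (hg : g ∈ commutator G) :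
    ∃ k, g ∈ Tcomm G k := by
  rw [commutator_eq_closure] at hg
  have hg0 : g ∈ (Subgroup.closure (commutatorSet G)).toSubmonoid := hg
  rw [Subgroup.closure_toSubmonoid] at hg0
  have hg' : g ∈ Submonoid.closure (commutatorSet G ∪ (commutatorSet G)⁻¹) := hg0
  obtain ⟨l, hl, rfl⟩ := Submonoid.exists_list_of_mem_closure hg'
  refine ⟨l.length, l, rfl, ?_, rfl⟩
  intro x hx
  rcases hl x hx with h | h
  · exact h
  · obtain ⟨a, b, hab⟩ := h
    exact ⟨b, a, by rw [← commutatorElement_inv, hab, inv_inv]⟩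

private lemma continuous_ofFn_prod {X M : Type*} [TopologicalSpace X] [Monoid M]
    [TopologicalSpace M] [ContinuousMul M] :
    ∀ {k : ℕ} (f : Fin k → X → M), (∀ i, Continuous (f i)) →
      Continuous fun x => (List.ofFn fun i => f i x).prod := by
  intro k
  induction k with
  | zero => intro f _; simpa using continuous_const
  | succ n ih =>
      intro f hf
      have : (fun x => (List.ofFn fun i => f i x).prod)
          = fun x => f 0 x * (List.ofFn fun i : Fin n => f i.succ x).prod := by
        funext x; simp [List.ofFn_succ]
      rw [this]
      exact (hf 0).mul (ih (fun i => f i.succ) fun i => hf i.succ)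

private lemma isClosed_Scomm {G : Type*} [Group G] [TopologicalSpace G] [IsTopologicalGroup G]
    [CompactSpace G] [T2Space G] (k : ℕ) : IsClosed (Scomm G k) := by
  have : Scomm G k = Set.range (fun p : (Fin k → G) × (Fin k → G) =>
      (List.ofFn fun i => p.1 i * p.2 i * (p.1 i)⁻¹ * (p.2 i)⁻¹).prod) := by
    ext g
    constructor
    · rintro ⟨a, b, rfl⟩; exact ⟨(a, b), rfl⟩
    · rintro ⟨⟨a, b⟩, rfl⟩; exact ⟨a, b, rfl⟩
  rw [this]
  have hcont : Continuous (fun p : (Fin k → G) × (Fin k → G) =>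
      (List.ofFn fun i => p.1 i * p.2 i * (p.1 i)⁻¹ * (p.2 i)⁻¹).prod) := by
    apply continuous_ofFn_prod
    intro i
    have h1 : Continuous fun p : (Fin k → G) × (Fin k → G) => p.1 i :=
      (continuous_apply i).comp continuous_fst
    have h2 : Continuous fun p : (Fin k → G) × (Fin k → G) => p.2 i :=
      (continuous_apply i).comp continuous_snd
    exact ((h1.mul h2).mul h1.inv).mul h2.inv
  exact (isCompact_range hcont).isClosed

end Aux

/-- If `G` is a profinite group whose abstract derived subgroup is open, then `G` has
finite commutator width: there is `N` such that every element of the derived subgroup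
is a product of at most `N` commutators. -/
theorem profinite_open_commutator_finite_width
    {G : Type*} [Group G] [TopologicalSpace G] [IsTopologicalGroup G]
    [CompactSpace G] [T2Space G] [TotallyDisconnectedSpace G]
    (hopen : IsOpen ((commutator G : Subgroup G) : Set G)) :
    ∃ N : ℕ, ∀ g ∈ commutator G, ∃ a b : Fin N → G,
      g = (List.ofFn fun i => a i * b i * (a i)⁻¹ * (b i)⁻¹).prod := by
  classical
  set D : Set G := ((commutator G : Subgroup G) : Set G) with hD
  have hTclosed : ∀ k, IsClosed (Tcomm G k) := fun k => by rw [← Scomm_eq_Tcomm]; exact isClosed_Scomm k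
  have hDclosed : IsClosed D := Subgroup.isClosed_of_isOpen (commutator G) hopen
  have hDcompact : IsCompact D := hDclosed.isCompact
  -- Baire category on the subtype `D`
  haveI : CompactSpace D := isCompact_iff_compactSpace.mp hDcompact
  haveI : Nonempty D := ⟨⟨1, Subgroup.one_mem _⟩⟩
  have hbaire := nonempty_interior_of_iUnion_of_closed
    (X := D) (f := fun k => Subtype.val ⁻¹' Tcomm G k)
    (fun k => (hTclosed k).preimage continuous_subtype_val) ?_
  swap
  · ext x
    simp only [Set.mem_iUnion, Set.mem_preimage, Set.mem_univ, iff_true]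
    exact mem_Tcomm_of_mem_commutator x.2
  obtain ⟨k, x, hx⟩ := hbaire
  -- An open subset of `G` contained in `Tcomm G k`
  set U : Set G := Subtype.val '' interior (Subtype.val ⁻¹' Tcomm G k) with hU
  have hUopen : IsOpen U := hopen.isOpenMap_subtype_val _ isOpen_interior
  have hUsub : U ⊆ Tcomm G k := by
    rintro g ⟨y, hy, rfl⟩
    have h2 : y ∈ Subtype.val ⁻¹' Tcomm G k := interior_subset hy
    exact h2
  have hxU : (x : G) ∈ U := ⟨x, hx, rfl⟩
  -- Open neighborhood of 1 inside Tcomm G (k + k)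
  set W : Set G := (x : G)⁻¹ • U with hW
  have hWopen : IsOpen W := hUopen.smul _
  have h1W : (1 : G) ∈ W := by
    refine ⟨(x : G), hxU, ?_⟩
    simp [smul_eq_mul]
  have hWsub : W ⊆ Tcomm G (k + k) := by
    rintro w ⟨u, hu, rfl⟩
    simp only [smul_eq_mul]
    exact Tcomm_mul (Tcomm_inv (hUsub hxU)) (hUsub hu)
  -- Finite subcover of D
  have hcov : D ⊆ ⋃ y : D, (y : G) • W := by
    intro g hg
    exact Set.mem_iUnion.mpr ⟨⟨g, hg⟩, 1, h1W, mul_one g⟩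
  obtain ⟨t, ht⟩ := hDcompact.elim_finite_subcover (fun y : D => (y : G) • W)
    (fun y => hWopen.smul _) hcov
  -- Bound the length needed for each center of the cover
  have hn : ∀ y : D, ∃ n, (y : G) ∈ Tcomm G n := fun y => mem_Tcomm_of_mem_commutator y.2
  choose n hnmem using hn
  refine ⟨t.sup n + (k + k), fun g hg => ?_⟩
  have : g ∈ Tcomm G (t.sup n + (k + k)) := by
    obtain ⟨y, hyt, hgy⟩ := Set.mem_iUnion₂.mp (ht hg)
    obtain ⟨w, hw, rfl⟩ := hgy
    simp only [smul_eq_mul]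
    exact Tcomm_mul (Tcomm_mono (Finset.le_sup hyt) (hnmem y)) (hWsub hw)
  rw [← Scomm_eq_Tcomm] at this
  exact this
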